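/- Let f be the Fibonacci word and let n ≥ 1 have Zeckendorf representation n = Σ_{i=0}^{k} t_i F_i with t_i ∈ {0,1}, t_k = 1, and no two consecutive t_{i+1} t_i both equal to 1 (where F_0 = 1, F_1 = 2, F_{n+2} = F_{n+1} + F_n). Then f_n = t_0, i.e., the n-th letter of the Fibonacci word equals the last digit of the Zeckendorf representation of n. -/

import Mathlib

/-- The set of occurrences of the finite word `u` in the infinite word `x`. -/
def Occ {A : Type*} (x : ℕ → A) (u : List A) : Set ℕ :=
  {n | u = (List.range u.length).map fun i => x (n + i)}

/-- `u` is a prefix of the infinite word `x`. -/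
def IsPref {A : Type*} (u : List A) (x : ℕ → A) : Prop :=
  u = (List.range u.length).map x

/-- The Fibonacci substitution 0 ↦ 01, 1 ↦ 0. -/
def σfib : ℕ → List ℕ := fun a => if a = 0 then [0, 1] else [0]

/-- Finite Fibonacci words. -/
def Xw : ℕ → List ℕ
  | 0 => [0]
  | n + 1 => (Xw n).flatMap σfib

lemma Xw_cat : ∀ n, Xw (n + 2) = Xw (n + 1) ++ Xw n := by
  intro n
  induction n with
  | zero => rfl
  | succ m ih =>
    show (Xw (m + 2)).flatMap σfib = _
    conv_lhs => rw [ih, List.flatMap_append]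
    rfl

section

variable (F : ℕ → ℕ) (hF0 : F 0 = 1) (hF1 : F 1 = 2)
  (hF : ∀ n, F (n + 2) = F (n + 1) + F n)

include hF0 hF1 hF in
lemma Xw_len : ∀ n, (Xw n).length = F n := by
  intro n
  induction n using Nat.strong_induction_on with
  | _ n ih =>
    match n with
    | 0 => simpa [Xw] using hF0.symm
    | 1 => simpa [Xw, σfib] using hF1.symm
    | (m + 2) =>
      rw [Xw_cat, List.length_append, ih (m + 1) (by omega), ih m (by omega), hF]

include hF0 hF1 hF in
lemma F_pos : ∀ n, 1 ≤ F n := by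
  intro n
  induction n using Nat.strong_induction_on with
  | _ n ih =>
    match n with
    | 0 => omega
    | 1 => omega
    | (m + 2) => have := ih m (by omega); have := ih (m + 1) (by omega); rw [hF]; omega

include hF0 hF1 hF in
lemma sum_bound (t : ℕ → ℕ) (ht01 : ∀ i, t i ≤ 1) :
    ∀ k, (∀ i, i + 1 < k → ¬(t i = 1 ∧ t (i + 1) = 1)) →
      ∑ i ∈ Finset.range k, t i * F i < F k := by
  intro k
  induction k using Nat.strong_induction_on with
  | _ k ih =>
    match k with
    | 0 => rw [Finset.sum_range_zero]; omega
    | 1 =>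
      intro _
      have := ht01 0
      simp [Finset.sum_range_one]
      nlinarith
    | (m + 2) =>
      intro hc
      have hFm := F_pos F hF0 hF1 hF m
      have hFm1 := F_pos F hF0 hF1 hF (m + 1)
      rw [Finset.sum_range_succ]
      rcases Nat.lt_or_ge (t (m + 1)) 1 with h | h
      · have h0 : t (m + 1) = 0 := by omega
        have := ih (m + 1) (by omega) (fun i hi => hc i (by omega))
        rw [h0, hF]
        omega
      · have h1 : t (m + 1) = 1 := le_antisymm (ht01 (m + 1)) h
        have h0 : t m = 0 := by
          have := hc m (by omega)
          have := ht01 m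
          omega
        rw [Finset.sum_range_succ, h0, h1, hF]
        have := ih m (by omega) (fun i hi => hc i (by omega))
        omega

end

section

variable (f : ℕ → ℕ) (hf0 : f 0 = 0)
  (hfix : ∀ n : ℕ, IsPref (((List.range n).map f).flatMap σfib) f)

include hf0 hfix in
lemma Xw_pref : ∀ n, IsPref (Xw n) f := by
  intro n
  induction n with
  | zero =>
    show [0] = (List.range 1).map f
    rw [show List.range 1 = [0] from rfl, List.map_singleton, hf0]
  | succ m ih =>
    have h := hfix (Xw m).length
    rw [IsPref] at ih
    rw [← ih] at h
    exact h

lemma pref_get {u : List ℕ} (h : IsPref u f) {i : ℕ} (hi : i < u.length) :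
    u[i]? = some (f i) := by
  conv_lhs => rw [h]
  rw [List.getElem?_map, List.getElem?_range hi, Option.map_some]

end

theorem stmt_9 (f : ℕ → ℕ) (hf0 : f 0 = 0)
    (hfix : ∀ n : ℕ, IsPref (((List.range n).map f).flatMap σfib) f)
    (F : ℕ → ℕ) (hF0 : F 0 = 1) (hF1 : F 1 = 2)
    (hF : ∀ n, F (n + 2) = F (n + 1) + F n)
    (n k : ℕ) (hn : 1 ≤ n) (t : ℕ → ℕ) (ht01 : ∀ i, t i ≤ 1) (htk : t k = 1)
    (hcons : ∀ i < k, ¬(t i = 1 ∧ t (i + 1) = 1))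
    (hrep : n = ∑ i ∈ Finset.range (k + 1), t i * F i) :
    f n = t 0 := by
  have hlen := Xw_len F hF0 hF1 hF
  have hpref := Xw_pref f hf0 hfix
  have hFpos := F_pos F hF0 hF1 hF
  -- f 1 = 1
  have hf1 : f 1 = 1 := by
    have h := pref_get f (hpref 1) (u := Xw 1) (i := 1) (by decide)
    have : (Xw 1)[1]? = some 1 := by decide
    rw [this] at h
    exact (Option.some.inj h).symm

  induction n using Nat.strong_induction_on generalizing k t with
  | _ n ih =>
    match k, htk, hcons, hrep with
    | 0, htk, hcons, hrep =>
      have : n = 1 := by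
        rw [Finset.sum_range_one, htk, hF0] at hrep
        omega
      rw [this, hf1, htk]
    | (k' + 1), htk, hcons, hrep =>
      have htk' : t k' = 0 := by
        have := hcons k' (by omega)
        have := ht01 k'
        omega
      set m := ∑ i ∈ Finset.range k', t i * F i with hm
      have hnm : n = F (k' + 1) + m := by
        rw [Finset.sum_range_succ, Finset.sum_range_succ, htk', htk] at hrep
        omega
      have hmlt : m < F k' :=
        sum_bound F hF0 hF1 hF t ht01 k' (fun i hi => hcons i (by omega))
      -- f n = f m
      have hfn : f n = f m := by
        have h1 := pref_get f (hpref (k' + 2)) (u := Xw (k' + 2)) (i := F (k' + 1) + m)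
          (by rw [hlen, hF]; omega)
        have h2 := pref_get f (hpref k') (u := Xw k') (i := m) (by rw [hlen]; omega)
        rw [Xw_cat, List.getElem?_append_right (by rw [hlen]; omega)] at h1
        rw [hlen] at h1
        have : F (k' + 1) + m - F (k' + 1) = m := by omega
        rw [this, h2] at h1
        rw [hnm]
        exact (Option.some.inj h1).symm
      rcases Nat.eq_zero_or_pos m with hm0 | hm1
      · -- t 0 = 0
        have ht0 : t 0 = 0 := by
          rcases Nat.eq_zero_or_pos k' with hk0 | hk1
          · rwa [hk0] at htk'
          · have hle : t 0 * F 0 ≤ m :=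
              Finset.single_le_sum (f := fun i => t i * F i) (fun i _ => Nat.zero_le _)
                (Finset.mem_range.mpr hk1)
            rw [hF0] at hle
            omega
        rw [hfn, hm0, hf0, ht0]
      · -- find largest j < k' with t j = 1
        have hex : ∃ i ∈ Finset.range k', t i = 1 := by
          by_contra hno
          push_neg at hno
          have : m = 0 := Finset.sum_eq_zero (fun i hi => by
            have h1 := hno i hi
            have h2 := ht01 i
            have : t i = 0 := by omega
            rw [this, Nat.zero_mul])
          omega
        set S := (Finset.range k').filter (fun i => t i = 1) with hS
        have hSne : S.Nonempty := by
          obtain ⟨i, hi, hti⟩ := hex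
          exact ⟨i, Finset.mem_filter.mpr ⟨hi, hti⟩⟩
        set j := S.max' hSne with hj
        have hjS : j ∈ S := S.max'_mem hSne
        have hjk : j < k' := Finset.mem_range.mp (Finset.mem_filter.mp hjS).1
        have htj : t j = 1 := (Finset.mem_filter.mp hjS).2
        have hmrep : m = ∑ i ∈ Finset.range (j + 1), t i * F i := by
          rw [hm]
          exact (Finset.sum_subset
            (Finset.range_subset_range.mpr (by omega))
            (fun i hi hni => by
              have hik : i < k' := Finset.mem_range.mp hi
              have hji : j < i := by
                simp only [Finset.mem_range, not_lt] at hni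
                omega
              have : t i = 0 := by
                by_contra hti
                have : t i = 1 := by have := ht01 i; omega
                have : i ∈ S := Finset.mem_filter.mpr ⟨Finset.mem_range.mpr hik, this⟩
                have := S.le_max' i this
                omega
              rw [this, Nat.zero_mul])).symm
        have hmn : m < n := by
          have := hFpos (k' + 1)
          omega
        rw [hfn]
        exact ih m hmn j hm1 t ht01 htj (fun i hi => hcons i (by omega)) hmrep
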